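/- Let A₁,…,Aₙ be positive semidefinite matrices over ℂ and f : [0,∞) → [0,∞) a convex function with f(0) = 0. Then tr(f(∑ⱼ Aⱼ)) ≥ tr(∑ⱼ f(Aⱼ)), where f acts via functional calculus. -/

import Mathlib

open scoped ComplexOrder

namespace KosemAux

variable {d : Type*} [Fintype d] [DecidableEq d]

local notation "⟪" x ", " y "⟫" => @inner ℂ _ _ x y

lemma trace_cfc' {M : Matrix d d ℂ} (hM : M.IsHermitian) (f : ℝ → ℝ) :
    (cfc f M).trace = ((∑ i, f (hM.eigenvalues i) : ℝ) : ℂ) := by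
  rw [hM.cfc_eq, Matrix.IsHermitian.cfc, Unitary.conjStarAlgAut_apply, Matrix.trace_mul_cycle]
  have h1 : (star (hM.eigenvectorUnitary : Matrix d d ℂ)) * hM.eigenvectorUnitary = 1 :=
    Unitary.coe_star_mul_self _
  rw [h1, Matrix.one_mul, Matrix.trace_diagonal]
  push_cast
  rfl

lemma trace_eigs {M : Matrix d d ℂ} (hM : M.IsHermitian) :
    M.trace = ((∑ i, hM.eigenvalues i : ℝ) : ℂ) := by
  have h2 : cfc (id : ℝ → ℝ) M = M := cfc_id ℝ M hM
  have := trace_cfc' hM id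
  rw [h2] at this
  simpa using this

lemma eigen_apply {M : Matrix d d ℂ} (hM : M.IsHermitian) (j : d) :
    Matrix.toEuclideanLin M (hM.eigenvectorBasis j) =
      (hM.eigenvalues j : ℂ) • hM.eigenvectorBasis j := by
  rw [Matrix.toEuclideanLin_apply]
  have h : (WithLp.equiv 2 (d → ℂ)) (hM.eigenvectorBasis j) = ⇑(hM.eigenvectorBasis j) := rfl
  rw [hM.mulVec_eigenvectorBasis j]
  refine PiLp.ext fun i => ?_
  simp [Complex.real_smul]

lemma quad_expand {M : Matrix d d ℂ} (hM : M.IsHermitian) (x : EuclideanSpace ℂ d) :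
    ⟪x, Matrix.toEuclideanLin M x⟫ =
      ((∑ l, hM.eigenvalues l * ‖⟪hM.eigenvectorBasis l, x⟫‖ ^ 2 : ℝ) : ℂ) := by
  have hsym : (Matrix.toEuclideanLin M).IsSymmetric := Matrix.isHermitian_iff_isSymmetric.mp hM
  rw [← (hM.eigenvectorBasis).sum_inner_mul_inner x (Matrix.toEuclideanLin M x)]
  push_cast
  refine Finset.sum_congr rfl fun l _ => ?_
  have h1 : ⟪hM.eigenvectorBasis l, Matrix.toEuclideanLin M x⟫ =
      (hM.eigenvalues l : ℂ) * ⟪hM.eigenvectorBasis l, x⟫ := by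
    rw [← hsym (hM.eigenvectorBasis l) x, eigen_apply hM l, inner_smul_left]
    simp [Complex.conj_ofReal]
  rw [h1, mul_comm, mul_assoc, ← inner_conj_symm x (hM.eigenvectorBasis l), RCLike.mul_conj]
  congr 1

lemma quad_expand_re {M : Matrix d d ℂ} (hM : M.IsHermitian) (x : EuclideanSpace ℂ d) :
    Complex.re ⟪x, Matrix.toEuclideanLin M x⟫ =
      ∑ l, hM.eigenvalues l * ‖⟪hM.eigenvectorBasis l, x⟫‖ ^ 2 := by
  rw [quad_expand hM x, Complex.ofReal_re]

section helpers
variable {F : Type*} [NormedAddCommGroup F] [InnerProductSpace ℂ F]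

lemma parseval' {ι : Type*} [Fintype ι] (b : OrthonormalBasis ι ℂ F) (x : F) :
    ∑ i, ‖⟪b i, x⟫‖ ^ 2 = ‖x‖ ^ 2 := by
  have h := b.sum_inner_mul_inner x x
  have h2 : ∀ i, ⟪x, b i⟫ * ⟪b i, x⟫ = ((‖⟪b i, x⟫‖ ^ 2 : ℝ) : ℂ) := fun i => by
    rw [← inner_conj_symm (b i) x, RCLike.mul_conj, RCLike.norm_conj, norm_inner_symm x (b i)]
    norm_cast
  rw [Finset.sum_congr rfl fun i _ => h2 i, ← Complex.ofReal_sum] at h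
  have h3 := congrArg Complex.re h
  rw [Complex.ofReal_re] at h3
  have h4 : Complex.re ⟪x, x⟫ = ‖x‖ ^ 2 := by
    rw [← RCLike.re_to_complex, inner_self_eq_norm_sq]
  rw [h3, h4]

lemma bessel' {ι : Type*} [Fintype ι] {v : ι → F} (hv : Orthonormal ℂ v) (x : F) (hx : ‖x‖ ≤ 1) :
    ∑ i, ‖⟪x, v i⟫‖ ^ 2 ≤ 1 := by
  calc ∑ i, ‖⟪x, v i⟫‖ ^ 2 = ∑ i, ‖⟪v i, x⟫‖ ^ 2 :=
        Finset.sum_congr rfl fun i _ => by rw [norm_inner_symm]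
    _ ≤ ‖x‖ ^ 2 := hv.sum_inner_products_le x
    _ ≤ 1 := by nlinarith [norm_nonneg x]

end helpers

/-- Lemma A : sum of quadratic forms over an orthonormal family, minus t each, is at most
the sum of positive parts of (eigenvalue - t). -/
lemma lemA {M : Matrix d d ℂ} (hM : M.IsHermitian) {K : Type*} [Fintype K]
    (w : K → EuclideanSpace ℂ d) (hw : Orthonormal ℂ w) (t : ℝ) :
    ∑ k, (Complex.re ⟪w k, Matrix.toEuclideanLin M (w k)⟫ - t) ≤
      ∑ i, max (hM.eigenvalues i - t) 0 := by
  classical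
  set u := hM.eigenvectorBasis with hu
  have hone : ∀ k, ∑ l, ‖⟪u l, w k⟫‖ ^ 2 = 1 := fun k => by
    rw [parseval' u (w k)]
    simp [hw.1 k]
  have key : ∀ k, Complex.re ⟪w k, Matrix.toEuclideanLin M (w k)⟫ - t =
      ∑ l, (hM.eigenvalues l - t) * ‖⟪u l, w k⟫‖ ^ 2 := fun k => by
    rw [quad_expand_re hM (w k)]
    have := hone k
    simp only [sub_mul, Finset.sum_sub_distrib, ← Finset.mul_sum, this]
    ring
  calc ∑ k, (Complex.re ⟪w k, Matrix.toEuclideanLin M (w k)⟫ - t)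
      = ∑ k, ∑ l, (hM.eigenvalues l - t) * ‖⟪u l, w k⟫‖ ^ 2 :=
        Finset.sum_congr rfl fun k _ => key k
    _ ≤ ∑ k, ∑ l, max (hM.eigenvalues l - t) 0 * ‖⟪u l, w k⟫‖ ^ 2 := by
        refine Finset.sum_le_sum fun k _ => Finset.sum_le_sum fun l _ => ?_
        exact mul_le_mul_of_nonneg_right (le_max_left _ _) (by positivity)
    _ = ∑ l, max (hM.eigenvalues l - t) 0 * ∑ k, ‖⟪u l, w k⟫‖ ^ 2 := by
        rw [Finset.sum_comm]
        exact Finset.sum_congr rfl fun l _ => by rw [Finset.mul_sum]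
    _ ≤ ∑ l, max (hM.eigenvalues l - t) 0 * 1 := by
        refine Finset.sum_le_sum fun l _ => ?_
        refine mul_le_mul_of_nonneg_left ?_ (le_max_right _ _)
        have : ∀ k, ‖⟪u l, w k⟫‖ ^ 2 = ‖⟪w k, u l⟫‖ ^ 2 := fun k => by rw [norm_inner_symm]
        rw [Finset.sum_congr rfl fun k _ => this k]
        calc ∑ k, ‖⟪w k, u l⟫‖ ^ 2 ≤ ‖u l‖ ^ 2 := hw.sum_inner_products_le (u l)
          _ = 1 := by simp [u.orthonormal.1 l]
    _ = ∑ i, max (hM.eigenvalues i - t) 0 := by simp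

/-- Lemma B : for a PSD matrix, sum of the quadratic form over an orthonormal family inside `V`
is at most its sum over an orthonormal basis of `V`. -/
lemma lemB {M : Matrix d d ℂ} (hM : M.PosSemidef) {K ι : Type*} [Fintype K] [Fintype ι]
    (V : Submodule ℂ (EuclideanSpace ℂ d)) (w : OrthonormalBasis K ℂ V)
    (v : ι → EuclideanSpace ℂ d) (hv : Orthonormal ℂ v) (hvV : ∀ i, v i ∈ V) :
    ∑ i, Complex.re ⟪v i, Matrix.toEuclideanLin M (v i)⟫ ≤
      ∑ k, Complex.re ⟪(w k : EuclideanSpace ℂ d), Matrix.toEuclideanLin M (w k : EuclideanSpace ℂ d)⟫ := by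
  classical
  have hH := hM.1
  set u := hH.eigenvectorBasis with hu
  -- key: for any x, ∑ i ‖⟪x, v i⟫‖² ≤ ∑ k ‖⟪x, w k⟫‖²
  have key : ∀ x : EuclideanSpace ℂ d,
      ∑ i, ‖⟪x, v i⟫‖ ^ 2 ≤ ∑ k, ‖⟪x, (w k : EuclideanSpace ℂ d)⟫‖ ^ 2 := by
    intro x
    obtain ⟨y, hxz⟩ : ∃ y : V, ∀ z ∈ V, ⟪x, z⟫ = ⟪(y : EuclideanSpace ℂ d), z⟫ := by
      refine ⟨V.orthogonalProjectionOnto x, fun z hz => ?_⟩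
      have h0 := V.starProjection_inner_eq_zero x z hz
      rw [inner_sub_left, sub_eq_zero, Submodule.starProjection_apply] at h0
      exact h0
    have h1 : ∑ i, ‖⟪x, v i⟫‖ ^ 2 = ∑ i, ‖⟪(y : EuclideanSpace ℂ d), v i⟫‖ ^ 2 :=
      Finset.sum_congr rfl fun i _ => by rw [hxz (v i) (hvV i)]
    have h2 : ∑ i, ‖⟪(y : EuclideanSpace ℂ d), v i⟫‖ ^ 2 ≤ ‖(y : EuclideanSpace ℂ d)‖ ^ 2 := by
      calc ∑ i, ‖⟪(y : EuclideanSpace ℂ d), v i⟫‖ ^ 2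
          = ∑ i, ‖⟪v i, (y : EuclideanSpace ℂ d)⟫‖ ^ 2 :=
            Finset.sum_congr rfl fun i _ => by rw [norm_inner_symm]
        _ ≤ ‖(y : EuclideanSpace ℂ d)‖ ^ 2 := hv.sum_inner_products_le _
    have h3 : ‖(y : EuclideanSpace ℂ d)‖ ^ 2 = ∑ k, ‖⟪x, (w k : EuclideanSpace ℂ d)⟫‖ ^ 2 := by
      have hp := parseval' w y
      simp only [Submodule.coe_inner] at hp
      rw [Submodule.norm_coe, ← hp]
      refine Finset.sum_congr rfl fun k _ => ?_
      rw [norm_inner_symm, ← hxz (w k) (w k).2]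
    calc ∑ i, ‖⟪x, v i⟫‖ ^ 2 = ∑ i, ‖⟪(y : EuclideanSpace ℂ d), v i⟫‖ ^ 2 := h1
      _ ≤ ‖(y : EuclideanSpace ℂ d)‖ ^ 2 := h2
      _ = ∑ k, ‖⟪x, (w k : EuclideanSpace ℂ d)⟫‖ ^ 2 := h3
  -- expand both sides via eigenvalues of M
  have hexp : ∀ x : EuclideanSpace ℂ d, Complex.re ⟪x, Matrix.toEuclideanLin M x⟫ =
      ∑ l, hH.eigenvalues l * ‖⟪u l, x⟫‖ ^ 2 := fun x => quad_expand_re hH x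
  calc ∑ i, Complex.re ⟪v i, Matrix.toEuclideanLin M (v i)⟫
      = ∑ l, hH.eigenvalues l * ∑ i, ‖⟪u l, v i⟫‖ ^ 2 := by
        simp only [hexp, Finset.mul_sum]
        exact Finset.sum_comm
    _ ≤ ∑ l, hH.eigenvalues l * ∑ k, ‖⟪u l, (w k : EuclideanSpace ℂ d)⟫‖ ^ 2 :=
        Finset.sum_le_sum fun l _ =>
          mul_le_mul_of_nonneg_left (key (u l)) (hM.eigenvalues_nonneg l)
    _ = ∑ k, Complex.re ⟪(w k : EuclideanSpace ℂ d), Matrix.toEuclideanLin M (w k : EuclideanSpace ℂ d)⟫ := by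
        simp only [hexp, Finset.mul_sum]
        exact Finset.sum_comm

end KosemAux

namespace Step2

variable {d : Type*} [Fintype d] [DecidableEq d]

local notation "⟪" x ", " y "⟫" => @inner ℂ _ _ x y

lemma quad_eig {M : Matrix d d ℂ} (hM : M.IsHermitian) (i : d) :
    Complex.re ⟪hM.eigenvectorBasis i, Matrix.toEuclideanLin M (hM.eigenvectorBasis i)⟫ =
      hM.eigenvalues i := by
  rw [KosemAux.eigen_apply hM i, inner_smul_right, inner_self_eq_norm_sq_to_K]
  have h1 : ‖hM.eigenvectorBasis i‖ = 1 := hM.eigenvectorBasis.orthonormal.1 i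
  rw [h1]
  norm_num

lemma step2 {m : ℕ} (A : Fin m → Matrix d d ℂ) (hA : ∀ j, (A j).PosSemidef)
    (hS : (∑ j, A j).IsHermitian) (t : ℝ) (ht : 0 ≤ t) :
    ∑ j, ∑ i, max ((hA j).1.eigenvalues i - t) 0 ≤ ∑ i, max (hS.eigenvalues i - t) 0 := by
  classical
  set a : Fin m → d → ℝ := fun j => (hA j).1.eigenvalues with ha
  set s : Fin m → Finset d := fun j => Finset.univ.filter (fun i => t < a j i) with hs
  -- the combined eigenvector family
  let ι := (j : Fin m) × {i : d // i ∈ s j}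
  let v : ι → EuclideanSpace ℂ d := fun p => (hA p.1).1.eigenvectorBasis p.2.1
  let V : Submodule ℂ (EuclideanSpace ℂ d) := Submodule.span ℂ (Set.range v)
  have hdim : Module.finrank ℂ V ≤ Fintype.card ι := finrank_range_le_card v
  have hcard : Fintype.card ι = ∑ j, (s j).card := by
    rw [Fintype.card_sigma]
    exact Finset.sum_congr rfl fun j _ => Fintype.card_coe _
  set n := Module.finrank ℂ V with hn
  let w : OrthonormalBasis (Fin n) ℂ V := stdOrthonormalBasis ℂ V
  let wE : Fin n → EuclideanSpace ℂ d := fun k => (w k : EuclideanSpace ℂ d)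
  have hwE : Orthonormal ℂ wE := by
    constructor
    · intro k
      rw [Submodule.norm_coe]
      exact w.orthonormal.1 k
    · intro k k' hkk'
      rw [← Submodule.coe_inner]
      exact w.orthonormal.2 hkk'
  -- rewrite each max-sum as a filtered sum
  have hfilter : ∀ (b : d → ℝ), ∑ i, max (b i - t) 0 =
      ∑ i ∈ Finset.univ.filter (fun i => t < b i), (b i - t) := by
    intro b
    rw [Finset.sum_filter]
    refine Finset.sum_congr rfl fun i _ => ?_
    split_ifs with h
    · exact max_eq_left (by linarith)
    · exact max_eq_right (by linarith)
  -- per j : sum of selected eigenvalues bounded by quadratic forms over wE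
  have hj : ∀ j, ∑ i ∈ s j, a j i ≤
      ∑ k, Complex.re ⟪wE k, Matrix.toEuclideanLin (A j) (wE k)⟫ := by
    intro j
    have hvj : Orthonormal ℂ (fun i : {i : d // i ∈ s j} => (hA j).1.eigenvectorBasis i.1) :=
      (hA j).1.eigenvectorBasis.orthonormal.comp _ Subtype.val_injective
    have hmem : ∀ i : {i : d // i ∈ s j}, (hA j).1.eigenvectorBasis i.1 ∈ V :=
      fun i => Submodule.subset_span ⟨⟨j, i⟩, rfl⟩
    have := KosemAux.lemB (hA j) V w _ hvj hmem
    refine le_trans (le_of_eq ?_) this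
    rw [← Finset.sum_coe_sort (s j) (fun i => a j i)]
    exact Finset.sum_congr rfl fun i _ => (quad_eig (hA j).1 i.1).symm
  -- linearity of quadratic forms in the matrix
  have hlin : ∀ k, Complex.re ⟪wE k, Matrix.toEuclideanLin (∑ j, A j) (wE k)⟫ =
      ∑ j, Complex.re ⟪wE k, Matrix.toEuclideanLin (A j) (wE k)⟫ := by
    intro k
    rw [map_sum Matrix.toEuclideanLin A Finset.univ, LinearMap.coe_sum, Finset.sum_apply,
      inner_sum]
    rw [Complex.re_sum]
  -- assemble
  have main := KosemAux.lemA hS wE hwE t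
  have hQ : ∑ k, (Complex.re ⟪wE k, Matrix.toEuclideanLin (∑ j, A j) (wE k)⟫ - t) =
      (∑ j, ∑ k, Complex.re ⟪wE k, Matrix.toEuclideanLin (A j) (wE k)⟫) - n * t := by
    rw [Finset.sum_sub_distrib, Finset.sum_const, Finset.card_univ, Fintype.card_fin,
      nsmul_eq_mul]
    congr 1
    rw [Finset.sum_congr rfl fun k _ => hlin k, Finset.sum_comm]
  calc ∑ j, ∑ i, max (a j i - t) 0
      = ∑ j, (∑ i ∈ s j, a j i - (s j).card * t) := by
        refine Finset.sum_congr rfl fun j _ => ?_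
        rw [hfilter (a j), Finset.sum_sub_distrib, Finset.sum_const, nsmul_eq_mul]
    _ = (∑ j, ∑ i ∈ s j, a j i) - (∑ j, (s j).card : ℕ) * t := by
        rw [Finset.sum_sub_distrib]
        push_cast
        rw [Finset.sum_mul]
    _ ≤ (∑ j, ∑ k, Complex.re ⟪wE k, Matrix.toEuclideanLin (A j) (wE k)⟫) - n * t := by
        have h1 : (n : ℝ) * t ≤ (∑ j, (s j).card : ℕ) * t := by
          refine mul_le_mul_of_nonneg_right ?_ ht
          exact_mod_cast hcard ▸ hdim
        have h2 := Finset.sum_le_sum fun j (_ : j ∈ Finset.univ) => hj j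
        linarith
    _ = ∑ k, (Complex.re ⟪wE k, Matrix.toEuclideanLin (∑ j, A j) (wE k)⟫ - t) := hQ.symm
    _ ≤ ∑ i, max (hS.eigenvalues i - t) 0 := main

end Step2

namespace Step3

variable (f : ℝ → ℝ) (P : Finset ℝ)

/-- sorted enumeration of `P`, extended by `0`. -/
noncomputable def pt (k : ℕ) : ℝ :=
  if h : k < P.card then (P.orderIsoOfFin rfl ⟨k, h⟩ : ℝ) else 0

/-- slope of `f` between consecutive nodes. -/
noncomputable def sl (k : ℕ) : ℝ := (f (pt P (k+1)) - f (pt P k)) / (pt P (k+1) - pt P k)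

/-- piecewise linear interpolant of `f` through the nodes of `P`. -/
noncomputable def G (x : ℝ) : ℝ :=
  sl f P 0 * x + ∑ k ∈ Finset.Ico 1 (P.card - 1), (sl f P k - sl f P (k-1)) * max (x - pt P k) 0

lemma pt_mem {k : ℕ} (hk : k < P.card) : pt P k ∈ P := by
  rw [pt, dif_pos hk]
  exact (P.orderIsoOfFin rfl ⟨k, hk⟩).2

lemma pt_lt {k l : ℕ} (h : k < l) (hl : l < P.card) : pt P k < pt P l := by
  rw [pt, pt, dif_pos (lt_trans h hl), dif_pos hl]
  exact Subtype.coe_lt_coe.mpr ((P.orderIsoOfFin rfl).lt_iff_lt.mpr (Fin.mk_lt_mk.mpr h))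

lemma pt_le {k l : ℕ} (h : k ≤ l) (hl : l < P.card) : pt P k ≤ pt P l := by
  rcases eq_or_lt_of_le h with rfl | h'
  · exact le_refl _
  · exact le_of_lt (pt_lt P h' hl)

lemma pt_surj {x : ℝ} (hx : x ∈ P) : ∃ k, k < P.card ∧ pt P k = x := by
  obtain ⟨k, hk⟩ := (P.orderIsoOfFin rfl).surjective ⟨x, hx⟩
  exact ⟨k.1, k.2, by rw [pt, dif_pos k.2]; exact congrArg Subtype.val hk⟩

variable (hP0 : (0:ℝ) ∈ P) (hPnn : ∀ x ∈ P, 0 ≤ x)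

include hP0 hPnn in
lemma pt_zero : pt P 0 = 0 := by
  have hcard : 0 < P.card := Finset.card_pos.mpr ⟨0, hP0⟩
  obtain ⟨k, hk, hpk⟩ := pt_surj P hP0
  have h1 : pt P 0 ≤ pt P k := pt_le P (Nat.zero_le k) hk
  have h2 : 0 ≤ pt P 0 := hPnn _ (pt_mem P hcard)
  rw [hpk] at h1
  linarith

include hPnn in
lemma pt_nonneg (k : ℕ) : 0 ≤ pt P k := by
  by_cases h : k < P.card
  · exact hPnn _ (pt_mem P h)
  · rw [pt, dif_neg h]

end Step3

namespace Step3

variable {f : ℝ → ℝ} (hf : ConvexOn ℝ (Set.Ici 0) f)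
  (hf0 : ∀ x ∈ Set.Ici (0:ℝ), 0 ≤ f x) (hf00 : f 0 = 0)
variable {P : Finset ℝ} (hP0 : (0:ℝ) ∈ P) (hPnn : ∀ x ∈ P, 0 ≤ x)

include hf0 hf00 hP0 hPnn in
lemma sl_zero_nonneg : 0 ≤ sl f P 0 := by
  by_cases h : 1 < P.card
  · have h0 : pt P 0 = 0 := pt_zero P hP0 hPnn
    have h1 : 0 < pt P 1 := by
      have h2 := pt_lt P Nat.zero_lt_one h
      rw [h0] at h2
      exact h2
    rw [sl, h0, hf00]
    apply div_nonneg
    · simp only [sub_zero]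
      exact hf0 _ (le_of_lt h1)
    · linarith
  · have h1 : pt P 1 = 0 := by rw [pt, dif_neg (by omega)]
    have h0 : pt P 0 = 0 := pt_zero P hP0 hPnn
    rw [sl, h0, h1, sub_self, zero_div]

include hf hPnn in
lemma sl_mono {k : ℕ} (hk1 : 1 ≤ k) (hk : k + 1 < P.card) :
    sl f P (k-1) ≤ sl f P k := by
  have hkk : k - 1 + 1 = k := by omega
  have hx : pt P (k-1) < pt P k := pt_lt P (by omega) (by omega)
  have hy : pt P k < pt P (k+1) := pt_lt P (by omega) hk
  have hxm : pt P (k-1) ∈ Set.Ici (0:ℝ) := hPnn _ (pt_mem P (by omega))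
  have hzm : pt P (k+1) ∈ Set.Ici (0:ℝ) := hPnn _ (pt_mem P hk)
  have := hf.slope_mono_adjacent hxm hzm hx hy
  rw [sl, sl, hkk]
  exact this

lemma G_succ {l : ℕ} (hl : l + 1 < P.card) :
    G f P (pt P (l+1)) = G f P (pt P l) + sl f P l * (pt P (l+1) - pt P l) := by
  have hmid : l + 1 ≤ P.card - 1 := by omega
  have hsplit : ∀ x : ℝ,
      ∑ k ∈ Finset.Ico 1 (P.card - 1), (sl f P k - sl f P (k-1)) * max (x - pt P k) 0 =
      ∑ k ∈ Finset.Ico 1 (l+1), (sl f P k - sl f P (k-1)) * max (x - pt P k) 0 +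
      ∑ k ∈ Finset.Ico (l+1) (P.card - 1), (sl f P k - sl f P (k-1)) * max (x - pt P k) 0 :=
    fun x => (Finset.sum_Ico_consecutive _ (by omega) hmid).symm
  have htail : ∀ x : ℝ, x ≤ pt P (l+1) →
      ∑ k ∈ Finset.Ico (l+1) (P.card - 1), (sl f P k - sl f P (k-1)) * max (x - pt P k) 0 = 0 := by
    intro x hx
    refine Finset.sum_eq_zero fun k hk => ?_
    rw [Finset.mem_Ico] at hk
    have : x ≤ pt P k := le_trans hx (pt_le P hk.1 (by omega))
    rw [max_eq_right (by linarith), mul_zero]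
  have hhead : ∀ k ∈ Finset.Ico 1 (l+1),
      (sl f P k - sl f P (k-1)) * max (pt P (l+1) - pt P k) 0 =
      (sl f P k - sl f P (k-1)) * (pt P l - pt P k) +
      (sl f P k - sl f P (k-1)) * (pt P (l+1) - pt P l) := by
    intro k hk
    rw [Finset.mem_Ico] at hk
    have h1 : pt P k ≤ pt P l := pt_le P (by omega) (by omega)
    have h2 : pt P l ≤ pt P (l+1) := pt_le P (by omega) hl
    rw [max_eq_left (by linarith)]
    ring
  have hhead' : ∀ k ∈ Finset.Ico 1 (l+1),
      (sl f P k - sl f P (k-1)) * max (pt P l - pt P k) 0 =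
      (sl f P k - sl f P (k-1)) * (pt P l - pt P k) := by
    intro k hk
    rw [Finset.mem_Ico] at hk
    have h1 : pt P k ≤ pt P l := pt_le P (by omega) (by omega)
    rw [max_eq_left (by linarith)]
  have htel : ∑ k ∈ Finset.Ico 1 (l+1), (sl f P k - sl f P (k-1)) = sl f P l - sl f P 0 := by
    rw [Finset.sum_Ico_eq_sum_range]
    have : ∀ k ∈ Finset.range (l + 1 - 1), sl f P (1 + k) - sl f P (1 + k - 1) =
        sl f P (k+1) - sl f P k := by
      intro k _
      congr 2 <;> omega
    rw [Finset.sum_congr rfl this]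
    simpa using Finset.sum_range_sub (fun k => sl f P k) (l + 1 - 1)
  rw [G, G, hsplit, hsplit, htail _ (le_refl _),
    htail _ (le_of_lt (pt_lt P (Nat.lt_succ_self l) hl)),
    Finset.sum_congr rfl hhead, Finset.sum_congr rfl hhead', Finset.sum_add_distrib,
    ← Finset.sum_mul, htel]
  ring

include hPnn in
lemma G_zero : G f P 0 = 0 := by
  rw [G, mul_zero, zero_add]
  refine Finset.sum_eq_zero fun k hk => ?_
  have : (0:ℝ) - pt P k ≤ 0 := by
    have := pt_nonneg P hPnn k
    linarith
  rw [max_eq_right this, mul_zero]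

include hf00 hP0 hPnn in
lemma G_eq : ∀ l, l < P.card → G f P (pt P l) = f (pt P l) := by
  intro l
  induction l with
  | zero =>
    intro _
    rw [pt_zero P hP0 hPnn, G_zero hPnn, hf00]
  | succ l ih =>
    intro hl
    have hlt : pt P l < pt P (l+1) := pt_lt P (Nat.lt_succ_self l) hl
    rw [G_succ hl, ih (by omega), sl, div_mul_cancel₀ _ (sub_ne_zero.mpr (ne_of_gt hlt))]
    ring

end Step3

namespace Step3

variable {f : ℝ → ℝ}

lemma G_expand (P : Finset ℝ) {γ : Type*} [Fintype γ] (b : γ → ℝ) :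
    ∑ x, G f P (b x) = sl f P 0 * ∑ x, b x +
      ∑ k ∈ Finset.Ico 1 (P.card - 1), (sl f P k - sl f P (k-1)) * ∑ x, max (b x - pt P k) 0 := by
  simp only [G]
  rw [Finset.sum_add_distrib, Finset.mul_sum]
  congr 1
  rw [Finset.sum_comm]
  exact Finset.sum_congr rfl fun k _ => (Finset.mul_sum _ _ _).symm

lemma convex_pl {ι κ : Type*} [Fintype ι] [Fintype κ]
    (c : ι → ℝ) (a : κ → ℝ) (hc : ∀ i, 0 ≤ c i) (haa : ∀ k, 0 ≤ a k)
    (hsum : ∑ k, a k = ∑ i, c i)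
    (hangle : ∀ t, 0 ≤ t → ∑ k, max (a k - t) 0 ≤ ∑ i, max (c i - t) 0)
    (hf : ConvexOn ℝ (Set.Ici 0) f)
    (hf0 : ∀ x ∈ Set.Ici (0:ℝ), 0 ≤ f x) (hf00 : f 0 = 0) :
    ∑ k, f (a k) ≤ ∑ i, f (c i) := by
  classical
  set P : Finset ℝ := insert 0 (Finset.univ.image c ∪ Finset.univ.image a) with hP
  have hP0 : (0:ℝ) ∈ P := Finset.mem_insert_self _ _
  have hPnn : ∀ x ∈ P, 0 ≤ x := by
    intro x hx
    rw [hP, Finset.mem_insert, Finset.mem_union] at hx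
    rcases hx with rfl | hx | hx
    · exact le_refl 0
    · obtain ⟨i, _, rfl⟩ := Finset.mem_image.mp hx
      exact hc i
    · obtain ⟨k, _, rfl⟩ := Finset.mem_image.mp hx
      exact haa k
  have hGf : ∀ x ∈ P, G f P x = f x := by
    intro x hx
    obtain ⟨k, hk, hpk⟩ := pt_surj P hx
    rw [← hpk]
    exact G_eq hf00 hP0 hPnn k hk
  have hcP : ∀ i, c i ∈ P := fun i => by
    rw [hP, Finset.mem_insert, Finset.mem_union]
    exact Or.inr (Or.inl (Finset.mem_image.mpr ⟨i, Finset.mem_univ i, rfl⟩))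
  have haP : ∀ k, a k ∈ P := fun k => by
    rw [hP, Finset.mem_insert, Finset.mem_union]
    exact Or.inr (Or.inr (Finset.mem_image.mpr ⟨k, Finset.mem_univ k, rfl⟩))
  have hs0 : 0 ≤ sl f P 0 := sl_zero_nonneg hf0 hf00 hP0 hPnn
  calc ∑ k, f (a k) = ∑ k, G f P (a k) :=
        (Finset.sum_congr rfl fun k _ => hGf _ (haP k)).symm
    _ = sl f P 0 * ∑ k, a k +
        ∑ k ∈ Finset.Ico 1 (P.card - 1), (sl f P k - sl f P (k-1)) * ∑ x, max (a x - pt P k) 0 :=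
        G_expand P a
    _ ≤ sl f P 0 * ∑ i, c i +
        ∑ k ∈ Finset.Ico 1 (P.card - 1), (sl f P k - sl f P (k-1)) * ∑ x, max (c x - pt P k) 0 := by
        refine add_le_add (by rw [hsum]) (Finset.sum_le_sum fun k hk => ?_)
        rw [Finset.mem_Ico] at hk
        have hβ : 0 ≤ sl f P k - sl f P (k-1) := by
          have := sl_mono hf hPnn hk.1 (by omega)
          linarith
        exact mul_le_mul_of_nonneg_left
          (hangle (pt P k) (pt_nonneg P hPnn k)) hβ
    _ = ∑ i, G f P (c i) := (G_expand P c).symm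
    _ = ∑ i, f (c i) := Finset.sum_congr rfl fun i _ => hGf _ (hcP i)

end Step3

open scoped ComplexOrder

/-- Kosem's trace inequality: for PSD matrices and a nonnegative convex `f` with `f 0 = 0`,
`tr (f (∑ Aⱼ)) ≥ tr (∑ f (Aⱼ))`, with `f` applied via the continuous functional calculus. -/
theorem trace_kosem_inequality
    {d : Type*} [Fintype d] [DecidableEq d] {m : ℕ}
    (A : Fin m → Matrix d d ℂ) (hA : ∀ j, (A j).PosSemidef)
    (f : ℝ → ℝ) (hf : ConvexOn ℝ (Set.Ici 0) f)
    (hf0 : ∀ x ∈ Set.Ici (0:ℝ), 0 ≤ f x) (hf00 : f 0 = 0) :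
    ((cfc f (∑ j, A j)).trace).re ≥ ((∑ j, cfc f (A j)).trace).re := by
  classical
  have hSpsd : (∑ j, A j).PosSemidef :=
    Finset.sum_induction A _ (fun a b ha hb => ha.add hb) Matrix.PosSemidef.zero
      (fun j _ => hA j)
  have hS : (∑ j, A j).IsHermitian := hSpsd.1
  -- rewrite both traces via eigenvalues
  have hL : ((cfc f (∑ j, A j)).trace).re = ∑ i, f (hS.eigenvalues i) := by
    rw [KosemAux.trace_cfc' hS f, Complex.ofReal_re]
  have hR : ((∑ j, cfc f (A j)).trace).re = ∑ j, ∑ i, f ((hA j).1.eigenvalues i) := by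
    rw [Matrix.trace_sum]
    rw [Finset.sum_congr rfl fun j (_ : j ∈ Finset.univ) => KosemAux.trace_cfc' (hA j).1 f]
    rw [← Complex.ofReal_sum, Complex.ofReal_re]
  rw [hL, hR, ge_iff_le]
  have hsig : ∀ g : ((_ : Fin m) × d) → ℝ, ∑ p : (_ : Fin m) × d, g p = ∑ j, ∑ i, g ⟨j, i⟩ := by
    intro g
    rw [← Finset.univ_sigma_univ, Finset.sum_sigma]
  -- apply the scalar inequality
  have key := Step3.convex_pl (ι := d) (κ := (j : Fin m) × d)
    (hS.eigenvalues) (fun p => (hA p.1).1.eigenvalues p.2)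
    (fun i => hSpsd.eigenvalues_nonneg i) (fun p => (hA p.1).eigenvalues_nonneg p.2)
    ?_ ?_ hf hf0 hf00
  · calc ∑ j, ∑ i, f ((hA j).1.eigenvalues i)
        = ∑ p : (j : Fin m) × d, f ((hA p.1).1.eigenvalues p.2) :=
          (hsig fun p => f ((hA p.1).1.eigenvalues p.2)).symm
      _ ≤ ∑ i, f (hS.eigenvalues i) := key
  · -- equal sums, via trace additivity
    have h1 : ((∑ i, hS.eigenvalues i : ℝ) : ℂ) = ((∑ j, ∑ i, (hA j).1.eigenvalues i : ℝ) : ℂ) := by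
      rw [← KosemAux.trace_eigs hS, Matrix.trace_sum]
      push_cast
      exact Finset.sum_congr rfl fun j _ => by
        rw [KosemAux.trace_eigs (hA j).1]
        push_cast
        rfl
    have h2 := Complex.ofReal_injective h1
    rw [hsig fun p => (hA p.1).1.eigenvalues p.2]
    exact h2.symm
  · -- angle inequalities from Step 2
    intro t ht
    rw [hsig fun p => max ((hA p.1).1.eigenvalues p.2 - t) 0]
    exact Step2.step2 A hA hS t ht
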